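/- Let d, d₁, g ∈ ℕ. Let J, J̃ ∈ M_d(ℝ) be symmetric matrices with J² = I and J̃² = I, let A₁,…,A_g and Ã₁,…,Ã_g ∈ M_d(ℝ) all be symmetric, and let C, C̃ ∈ M_{d₁×d}(ℝ). For a word w = (i₁,…,i_m) with letters in {1,…,g}, write (JA)^w := (J·A_{i₁})·(J·A_{i₂})···(J·A_{i_m}) (with empty product equal to I), and similarly (J̃Ã)^w. Assume: (controllability) the columns of the matrices (JA)^w·J·Cᵀ, taken over all words w, span ℝ^d, and likewise the columns of (J̃Ã)^w·J̃·C̃ᵀ span ℝ^d; (observability) the only v ∈ ℝ^d with C·(JA)^w·v = 0 for all words w is v = 0, and likewise for (C̃, J̃Ã). Suppose S ∈ M_d(ℝ) is invertible and satisfies S·J·A_j = J̃·Ã_j·S for all j = 1,…,g, S·J·Cᵀ = J̃·C̃ᵀ, and C = C̃·S. Then Sᵀ·J̃·S = J. Moreover, if J = I, then J̃ = I and S is orthogonal, i.e., Sᵀ·S = I. -/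

import Mathlib

open Matrix

/-- The product `(J·A_{i₁})···(J·A_{i_m})` along a word `w`. -/
def wordProdJA {d g : ℕ} (J : Matrix (Fin d) (Fin d) ℝ)
    (A : Fin g → Matrix (Fin d) (Fin d) ℝ) (w : List (Fin g)) :
    Matrix (Fin d) (Fin d) ℝ :=
  (w.map fun i => J * A i).prod

lemma wordProdJA_cons {d g : ℕ} (J : Matrix (Fin d) (Fin d) ℝ)
    (A : Fin g → Matrix (Fin d) (Fin d) ℝ) (i : Fin g) (w : List (Fin g)) :
    wordProdJA J A (i :: w) = (J * A i) * wordProdJA J A w := by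
  simp [wordProdJA]

/-- If `T` intertwines the generators, it intertwines all word products. -/
lemma intertwine_word {d g : ℕ} (J Jt : Matrix (Fin d) (Fin d) ℝ)
    (A At : Fin g → Matrix (Fin d) (Fin d) ℝ)
    (T : Matrix (Fin d) (Fin d) ℝ)
    (h : ∀ j, T * (Jt * At j) = (J * A j) * T) (w : List (Fin g)) :
    T * wordProdJA Jt At w = wordProdJA J A w * T := by
  induction w with
  | nil => simp [wordProdJA]
  | cons i w ih =>
      rw [wordProdJA_cons, wordProdJA_cons, ← mul_assoc, h i, mul_assoc, ih, ← mul_assoc]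

/-- Uniqueness of minimal symmetric descriptor realizations: the similarity transform
preserves the signature matrices, `SᵀJ̃S = J`; if `J = I` then `J̃ = I` and `S` is orthogonal. -/
theorem stmt_4 (d d₁ g : ℕ)
    (J Jt : Matrix (Fin d) (Fin d) ℝ)
    (A At : Fin g → Matrix (Fin d) (Fin d) ℝ)
    (C Ct : Matrix (Fin d₁) (Fin d) ℝ)
    (hJsym : Jᵀ = J) (hJ2 : J * J = 1)
    (hJtsym : Jtᵀ = Jt) (hJt2 : Jt * Jt = 1)
    (hAsym : ∀ j, (A j)ᵀ = A j) (hAtsym : ∀ j, (At j)ᵀ = At j)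
    (hctrl : (⨆ w : List (Fin g),
        LinearMap.range (Matrix.mulVecLin (wordProdJA J A w * J * Cᵀ))) = ⊤)
    (hctrlt : (⨆ w : List (Fin g),
        LinearMap.range (Matrix.mulVecLin (wordProdJA Jt At w * Jt * Ctᵀ))) = ⊤)
    (hobs : ∀ v : Fin d → ℝ,
      (∀ w : List (Fin g), (C * wordProdJA J A w).mulVec v = 0) → v = 0)
    (hobst : ∀ v : Fin d → ℝ,
      (∀ w : List (Fin g), (Ct * wordProdJA Jt At w).mulVec v = 0) → v = 0)
    (S : Matrix (Fin d) (Fin d) ℝ) (hS : IsUnit S)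
    (hSA : ∀ j, S * (J * A j) = Jt * At j * S)
    (hSC : S * (J * Cᵀ) = Jt * Ctᵀ)
    (hC : C = Ct * S) :
    Sᵀ * Jt * S = J ∧ (J = 1 → Jt = 1 ∧ Sᵀ * S = 1) := by
  have hdet : IsUnit S.det := (Matrix.isUnit_iff_isUnit_det S).mp hS
  have hinv1 : S⁻¹ * S = 1 := Matrix.nonsing_inv_mul S hdet
  have hinv2 : S * S⁻¹ = 1 := Matrix.mul_nonsing_inv S hdet
  -- `S⁻¹` intertwines tilde with untilde.
  have hTinv : ∀ j, S⁻¹ * (Jt * At j) = (J * A j) * S⁻¹ := by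
    intro j
    calc S⁻¹ * (Jt * At j) = S⁻¹ * (Jt * At j * S) * S⁻¹ := by
          rw [mul_assoc S⁻¹ (Jt * At j * S) S⁻¹, mul_assoc (Jt * At j) S S⁻¹,
            hinv2, mul_one]
      _ = S⁻¹ * (S * (J * A j)) * S⁻¹ := by rw [← hSA j]
      _ = (J * A j) * S⁻¹ := by rw [← mul_assoc, hinv1, one_mul]
  -- `T := J * Sᵀ * Jt` also intertwines tilde with untilde.
  set T : Matrix (Fin d) (Fin d) ℝ := J * Sᵀ * Jt with hTdef
  have hT : ∀ j, T * (Jt * At j) = (J * A j) * T := by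
    intro j
    have h1 : A j * J * Sᵀ = Sᵀ * (At j * Jt) := by
      have h := congrArg Matrix.transpose (hSA j)
      simp only [Matrix.transpose_mul, hJsym, hJtsym, hAsym j, hAtsym j] at h
      calc A j * J * Sᵀ = A j * Jᵀ * Sᵀ := by rw [hJsym]
        _ = (A j)ᵀ * Jᵀ * Sᵀ := by rw [hAsym j]
        _ = ((A j)ᵀ * Jᵀ) * Sᵀ := by rw [mul_assoc]
        _ = Sᵀ * (At j * Jt) := by
            simpa only [mul_assoc, hJsym, hJtsym, hAsym j, hAtsym j] using h
    have h2 : Sᵀ * At j = A j * J * Sᵀ * Jt := by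
      calc Sᵀ * At j = Sᵀ * (At j * (Jt * Jt)) := by rw [hJt2, mul_one]
        _ = Sᵀ * (At j * Jt) * Jt := by simp only [mul_assoc]
        _ = A j * J * Sᵀ * Jt := by rw [← h1]
    have h3 : Jt * (Jt * At j) = At j := by rw [← mul_assoc, hJt2, one_mul]
    calc T * (Jt * At j) = J * (Sᵀ * (Jt * (Jt * At j))) := by
          rw [hTdef]; simp only [mul_assoc]
      _ = J * (Sᵀ * At j) := by rw [h3]
      _ = J * (A j * J * Sᵀ * Jt) := by rw [h2]
      _ = (J * A j) * T := by rw [hTdef]; simp only [mul_assoc]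
  -- Both hit the controllability data the same way.
  have hCtr : Cᵀ = Sᵀ * Ctᵀ := by
    rw [hC, Matrix.transpose_mul]
  have hTC : T * (Jt * Ctᵀ) = J * Cᵀ := by
    have h3 : Jt * (Jt * Ctᵀ) = Ctᵀ := by
      rw [← Matrix.mul_assoc, hJt2, Matrix.one_mul]
    calc T * (Jt * Ctᵀ) = J * (Sᵀ * (Jt * (Jt * Ctᵀ))) := by
          rw [hTdef]; simp only [Matrix.mul_assoc]
      _ = J * (Sᵀ * Ctᵀ) := by rw [h3]
      _ = J * Cᵀ := by rw [← hCtr]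
  have hTinvC : S⁻¹ * (Jt * Ctᵀ) = J * Cᵀ := by
    rw [← hSC, ← Matrix.mul_assoc, hinv1, Matrix.one_mul]
  -- The difference kills all controllability data.
  have hDzero : ∀ w : List (Fin g),
      (S⁻¹ - T) * (wordProdJA Jt At w * Jt * Ctᵀ) = 0 := by
    intro w
    have e1 : S⁻¹ * (wordProdJA Jt At w * Jt * Ctᵀ)
        = wordProdJA J A w * (J * Cᵀ) := by
      calc S⁻¹ * (wordProdJA Jt At w * Jt * Ctᵀ)
          = (S⁻¹ * wordProdJA Jt At w) * (Jt * Ctᵀ) := by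
            simp only [Matrix.mul_assoc]
        _ = (wordProdJA J A w * S⁻¹) * (Jt * Ctᵀ) := by
            rw [intertwine_word J Jt A At S⁻¹ hTinv w]
        _ = wordProdJA J A w * (S⁻¹ * (Jt * Ctᵀ)) := by
            simp only [Matrix.mul_assoc]
        _ = wordProdJA J A w * (J * Cᵀ) := by rw [hTinvC]
    have e2 : T * (wordProdJA Jt At w * Jt * Ctᵀ)
        = wordProdJA J A w * (J * Cᵀ) := by
      calc T * (wordProdJA Jt At w * Jt * Ctᵀ)
          = (T * wordProdJA Jt At w) * (Jt * Ctᵀ) := by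
            simp only [Matrix.mul_assoc]
        _ = (wordProdJA J A w * T) * (Jt * Ctᵀ) := by
            rw [intertwine_word J Jt A At T hT w]
        _ = wordProdJA J A w * (T * (Jt * Ctᵀ)) := by
            simp only [Matrix.mul_assoc]
        _ = wordProdJA J A w * (J * Cᵀ) := by rw [hTC]
    rw [Matrix.sub_mul, e1, e2, sub_self]
  -- Hence `S⁻¹ = T` by controllability.
  have hvec : ∀ v : Fin d → ℝ, (S⁻¹ - T) *ᵥ v = 0 := by
    intro v
    have hv : v ∈ (⨆ w : List (Fin g),
        LinearMap.range (Matrix.mulVecLin (wordProdJA Jt At w * Jt * Ctᵀ))) := by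
      rw [hctrlt]; trivial
    refine Submodule.iSup_induction
      (motive := fun x => (S⁻¹ - T) *ᵥ x = 0) _ hv ?_ ?_ ?_
    · rintro w x ⟨y, rfl⟩
      rw [Matrix.mulVecLin_apply, Matrix.mulVec_mulVec, hDzero w, Matrix.zero_mulVec]
    · exact Matrix.mulVec_zero _
    · intro x y hx hy
      rw [Matrix.mulVec_add, hx, hy, add_zero]
  have hST : S⁻¹ = T := by
    have h0 : S⁻¹ - T = 0 := by
      ext i j
      have := congrFun (hvec (Pi.single j 1)) i
      simpa using this
    exact sub_eq_zero.mp h0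
  -- Main identity
  have hmain : Sᵀ * Jt * S = J := by
    have h4 : J * S⁻¹ = Sᵀ * Jt := by
      rw [hST, hTdef, ← mul_assoc, ← mul_assoc, hJ2, one_mul]
    calc Sᵀ * Jt * S = J * S⁻¹ * S := by rw [h4]
      _ = J * (S⁻¹ * S) := by rw [mul_assoc]
      _ = J := by rw [hinv1, mul_one]
  refine ⟨hmain, fun hJ1 => ?_⟩
  have hmain1 : Sᵀ * Jt * S = 1 := by rw [hmain, hJ1]
  have hSTJt : Sᵀ * Jt = S⁻¹ := by
    calc Sᵀ * Jt = Sᵀ * Jt * (S * S⁻¹) := by rw [hinv2, mul_one]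
      _ = (Sᵀ * Jt * S) * S⁻¹ := by simp only [mul_assoc]
      _ = S⁻¹ := by rw [hmain1, one_mul]
  have hdetT : IsUnit Sᵀ.det := by rwa [Matrix.det_transpose]
  have hJtval : Jt = (S⁻¹)ᵀ * S⁻¹ := by
    calc Jt = (Sᵀ)⁻¹ * (Sᵀ * Jt) := by
          rw [← mul_assoc, Matrix.nonsing_inv_mul Sᵀ hdetT, one_mul]
      _ = (Sᵀ)⁻¹ * S⁻¹ := by rw [hSTJt]
      _ = (S⁻¹)ᵀ * S⁻¹ := by rw [Matrix.transpose_nonsing_inv]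
  have hpsd : Jt.PosSemidef := by
    have : Jt = (S⁻¹)ᴴ * S⁻¹ := by
      rw [Matrix.conjTranspose_eq_transpose_of_trivial]; exact hJtval
    rw [this]
    exact Matrix.posSemidef_conjTranspose_mul_self _
  have hJt1 : Jt = 1 := by
    open scoped MatrixOrder in
    calc Jt = CFC.sqrt (Jt ^ 2) := (CFC.sqrt_sq Jt hpsd.nonneg).symm
      _ = 1 := by rw [sq, hJt2, CFC.sqrt_one]
  refine ⟨hJt1, ?_⟩
  calc Sᵀ * S = Sᵀ * Jt * S := by rw [hJt1, mul_one]
    _ = 1 := hmain1
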